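/- Let W be a nonempty finite type, m : Set W → ℝ a basic probability assignment (m(B) ≥ 0 for all B, m(∅) = 0, ∑_{B ⊆ W} m(B) = 1), and bel(A) := ∑_{B ⊆ A} m(B) the induced Dempster–Shafer belief function. Let ℰ be the set of minimal elements under set inclusion of {X ⊆ W | bel(X) > 0} (the elementary sets). Then ∑_{E ∈ ℰ} bel(E) ≤ 1: the sum of the beliefs of all elementary sets is at most 1. -/

import Mathlib

open Classical

theorem sum_bel_elementary_le_one (W : Type*) [Fintype W] [Nonempty W]
    (m : Set W → ℝ)
    (hm_nonneg : ∀ B : Set W, 0 ≤ m B) (hm_empty : m ∅ = 0)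
    (hm_total : ∑ B : Set W, m B = 1)
    (bel : Set W → ℝ)
    (hbel : ∀ A : Set W, bel A = ∑ B : Set W, if B ⊆ A then m B else 0) :
    ∑ E ∈ Finset.univ.filter (fun E : Set W => Minimal (fun X : Set W => bel X > 0) E),
      bel E ≤ 1 := by
  classical
  set F := Finset.univ.filter (fun E : Set W => Minimal (fun X : Set W => bel X > 0) E) with hF
  have hbelpos : ∀ (B A : Set W), 0 < m B → B ⊆ A → 0 < bel A := by
    intro B A hmB hBA
    rw [hbel]
    have h1 : (if B ⊆ A then m B else 0) ≤ ∑ C : Set W, if C ⊆ A then m C else 0 :=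
      Finset.single_le_sum (f := fun C : Set W => if C ⊆ A then m C else 0)
        (fun i _ => by split <;> [exact hm_nonneg _; exact le_refl 0]) (Finset.mem_univ B)
    rw [if_pos hBA] at h1
    exact lt_of_lt_of_le hmB h1
  have key : ∀ B : Set W, ∑ E ∈ F, (if B ⊆ E then m B else 0) ≤ m B := by
    intro B
    rcases eq_or_lt_of_le (hm_nonneg B) with h0 | hpos
    · simp [← h0]
    · rw [← Finset.sum_filter_add_sum_filter_not F (fun E => B ⊆ E)]
      have h2 : ∑ E ∈ F.filter (fun E => ¬ B ⊆ E), (if B ⊆ E then m B else 0) = 0 := by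
        apply Finset.sum_eq_zero; intro E hE
        rw [if_neg (Finset.mem_filter.mp hE).2]
      rw [h2, add_zero]
      have h3 : ∑ E ∈ F.filter (fun E => B ⊆ E), (if B ⊆ E then m B else 0)
          = (F.filter (fun E => B ⊆ E)).card • m B := by
        rw [← Finset.sum_const]
        apply Finset.sum_congr rfl; intro E hE
        rw [if_pos (Finset.mem_filter.mp hE).2]
      rw [h3]
      have hcard : (F.filter (fun E => B ⊆ E)).card ≤ 1 := by
        apply Finset.card_le_one.mpr
        intro E hE E' hE'
        obtain ⟨hEF, hBE⟩ := Finset.mem_filter.mp hE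
        obtain ⟨hE'F, hBE'⟩ := Finset.mem_filter.mp hE'
        have hEmin : Minimal (fun X : Set W => bel X > 0) E := (Finset.mem_filter.mp hEF).2
        have hE'min : Minimal (fun X : Set W => bel X > 0) E' := (Finset.mem_filter.mp hE'F).2
        have hint : bel (E ∩ E') > 0 :=
          hbelpos B _ hpos (Set.subset_inter hBE hBE')
        have h4 : E ⊆ E ∩ E' := hEmin.2 hint Set.inter_subset_left
        have h5 : E' ⊆ E ∩ E' := hE'min.2 hint Set.inter_subset_right
        exact Set.Subset.antisymm (h4.trans Set.inter_subset_right)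
          (h5.trans Set.inter_subset_left)
      calc (F.filter (fun E => B ⊆ E)).card • m B
          ≤ 1 • m B := by
            exact nsmul_le_nsmul_left (hm_nonneg B) hcard
        _ = m B := one_smul _ _
  calc ∑ E ∈ F, bel E
      = ∑ E ∈ F, ∑ B : Set W, if B ⊆ E then m B else 0 := by
        exact Finset.sum_congr rfl (fun E _ => hbel E)
    _ = ∑ B : Set W, ∑ E ∈ F, if B ⊆ E then m B else 0 := Finset.sum_comm
    _ ≤ ∑ B : Set W, m B := Finset.sum_le_sum (fun B _ => key B)
    _ = 1 := hm_total
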